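/- (Descent lemma, non-convex case.) Under the stated assumptions (L-smoothness, gradient-noise conditions, and mixing matrix conditions), if the step-size satisfies γ < 1/(4L), then for every k = 1, 2, … the Gossip-PGA iterates satisfy E f(x̄^{(k)}) ≤ E f(x̄^{(k−1)}) − (γ/4)·E‖∇f(x̄^{(k−1)})‖² + γ²·L·σ²/(2n) + (3·γ·L²/(4n))·E‖X^{(k−1)} − X̄^{(k−1)}‖_F². -/

import Mathlib

open MeasureTheory Finset
open scoped RealInnerProductSpace

lemma aux_integrable_inner {α E : Type*} [MeasurableSpace α] {μ : Measure α}
    [NormedAddCommGroup E] [InnerProductSpace ℝ E] {f g : α → E}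
    (hf : MemLp f 2 μ) (hg : MemLp g 2 μ) :
    Integrable (fun x => ⟪f x, g x⟫) μ := by
  have h := L2.integrable_inner (𝕜 := ℝ) (hf.toLp f) (hg.toLp g)
  refine h.congr ?_
  filter_upwards [hf.coeFn_toLp, hg.coeFn_toLp] with ω h1 h2
  rw [h1, h2]

lemma aux_integrable_norm_sq {α E : Type*} [MeasurableSpace α] {μ : Measure α}
    [NormedAddCommGroup E] [InnerProductSpace ℝ E] {f : α → E}
    (hf : MemLp f 2 μ) :
    Integrable (fun x => ‖f x‖ ^ 2) μ := by
  refine (aux_integrable_inner hf hf).congr (Filter.Eventually.of_forall fun ω => ?_)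
  simp only []
  rw [real_inner_self_eq_norm_sq]

lemma aux_condexp_comp_clm {α : Type*} {m m0 : MeasurableSpace α} (hm : m ≤ m0)
    {μ : Measure α} [IsFiniteMeasure μ]
    {E F : Type*} [NormedAddCommGroup E] [NormedSpace ℝ E] [CompleteSpace E]
    [NormedAddCommGroup F] [NormedSpace ℝ F] [CompleteSpace F]
    (T : E →L[ℝ] F) {f : α → E} (hf : Integrable f μ) :
    μ[fun ω => T (f ω) | m] =ᵐ[μ] fun ω => T ((μ[f|m]) ω) := by
  refine (ae_eq_condExp_of_forall_setIntegral_eq hm (T.integrable_comp hf)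
    (fun s _ _ => (T.integrable_comp integrable_condExp).integrableOn)
    (fun s hs hμs => ?_)
    (T.continuous.comp_stronglyMeasurable stronglyMeasurable_condExp).aestronglyMeasurable).symm
  rw [T.integral_comp_comm integrable_condExp.integrableOn,
      setIntegral_condExp hm hf hs, ← T.integral_comp_comm hf.integrableOn]

lemma aux_integral_inner_zero {α : Type*} {m m0 : MeasurableSpace α} (hm : m ≤ m0)
    {μ : Measure α} [IsProbabilityMeasure μ] {d : ℕ}
    {A N : α → EuclideanSpace ℝ (Fin d)}
    (hAm : StronglyMeasurable[m] A) (hA : MemLp A 2 μ) (hN : MemLp N 2 μ)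
    (hNmean : μ[N|m] =ᵐ[μ] 0) :
    ∫ ω, ⟪A ω, N ω⟫ ∂μ = 0 := by
  have hAt : ∀ t : Fin d, MemLp (fun ω => A ω t) 2 μ := fun t =>
    (EuclideanSpace.proj t : EuclideanSpace ℝ (Fin d) →L[ℝ] ℝ).comp_memLp' hA
  have hNt : ∀ t : Fin d, MemLp (fun ω => N ω t) 2 μ := fun t =>
    (EuclideanSpace.proj t : EuclideanSpace ℝ (Fin d) →L[ℝ] ℝ).comp_memLp' hN
  have hint : ∀ t : Fin d, Integrable (fun ω => A ω t * N ω t) μ := by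
    intro t
    have := aux_integrable_inner (hAt t) (hNt t)
    simpa [RCLike.inner_apply, conj_trivial, mul_comm] using this
  have hsplit : ∫ ω, ⟪A ω, N ω⟫ ∂μ = ∑ t, ∫ ω, A ω t * N ω t ∂μ := by
    rw [← integral_finset_sum _ fun t _ => hint t]
    refine integral_congr_ae (Filter.Eventually.of_forall fun ω => ?_)
    simp [PiLp.inner_apply, RCLike.inner_apply, conj_trivial, mul_comm]
  rw [hsplit]
  refine Finset.sum_eq_zero fun t _ => ?_
  have hNt0 : μ[fun ω => N ω t|m] =ᵐ[μ] 0 := by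
    have h1 := aux_condexp_comp_clm hm
      (EuclideanSpace.proj t : EuclideanSpace ℝ (Fin d) →L[ℝ] ℝ) (hN.integrable one_le_two)
    refine h1.trans ?_
    filter_upwards [hNmean] with ω hω
    simp [hω]
  have hAtm : StronglyMeasurable[m] (fun ω => A ω t) :=
    (EuclideanSpace.proj t :
      EuclideanSpace ℝ (Fin d) →L[ℝ] ℝ).continuous.comp_stronglyMeasurable hAm
  have hpull := condExp_mul_of_stronglyMeasurable_left (m := m) (μ := μ) hAtm
    (by exact hint t) ((hNt t).integrable one_le_two)
  calc ∫ ω, A ω t * N ω t ∂μ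
      = ∫ ω, (μ[(fun ω => A ω t) * fun ω => N ω t|m]) ω ∂μ :=
        (integral_condExp hm).symm
    _ = 0 := by
        rw [integral_congr_ae (hpull.trans ?_), integral_zero]
        filter_upwards [hNt0] with ω hω
        simp [Pi.mul_apply, hω]

lemma aux_descent {E : Type*} [NormedAddCommGroup E] [InnerProductSpace ℝ E] [CompleteSpace E]
    {F : E → ℝ} {G : E → E} {L : ℝ} (hL : 0 ≤ L)
    (hdiff : ∀ z, HasGradientAt F (G z) z)
    (hlip : ∀ y z, ‖G y - G z‖ ≤ L * ‖y - z‖) (x v : E) :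
    F (x + v) ≤ F x + ⟪G x, v⟫ + L / 2 * ‖v‖ ^ 2 := by
  have hGcont : Continuous G := by
    refine LipschitzWith.continuous (K := L.toNNReal) (LipschitzWith.of_dist_le_mul fun y z => ?_)
    rw [dist_eq_norm, dist_eq_norm]
    exact (hlip y z).trans (by rw [Real.coe_toNNReal L hL])
  have hφ : ∀ t : ℝ, HasDerivAt (fun t : ℝ => F (x + t • v)) ⟪G (x + t • v), v⟫ t := by
    intro t
    have h1 : HasDerivAt (fun t : ℝ => x + t • v) v t := by
      simpa using ((hasDerivAt_id t).smul_const v).const_add x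
    have h2 := (hdiff (x + t • v)).hasFDerivAt
    have h3 := h2.comp_hasDerivAt t h1
    simp only [InnerProductSpace.toDual_apply_apply] at h3
    exact h3
  have cont : Continuous fun t : ℝ => ⟪G (x + t • v), v⟫ :=
    (hGcont.comp (by continuity)).inner continuous_const
  have key := intervalIntegral.integral_eq_sub_of_hasDerivAt (a := (0:ℝ)) (b := 1)
    (fun t _ => hφ t) (cont.intervalIntegrable 0 1)
  simp only [one_smul, zero_smul, add_zero] at key
  have hbound : ∫ t in (0:ℝ)..1, ⟪G (x + t • v), v⟫
      ≤ ∫ t in (0:ℝ)..1, (⟪G x, v⟫ + L * ‖v‖ ^ 2 * t) := by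
    refine intervalIntegral.integral_mono_on zero_le_one (cont.intervalIntegrable 0 1)
      ((continuous_const.add (continuous_const.mul continuous_id')).intervalIntegrable 0 1)
      fun t ht => ?_
    have h4 : ⟪G (x + t • v), v⟫ = ⟪G x, v⟫ + ⟪G (x + t • v) - G x, v⟫ := by
      rw [inner_sub_left]; ring
    rw [h4]
    have h5 : ⟪G (x + t • v) - G x, v⟫ ≤ ‖G (x + t • v) - G x‖ * ‖v‖ := real_inner_le_norm _ _
    have h6 : ‖G (x + t • v) - G x‖ ≤ L * (t * ‖v‖) := by
      have := hlip (x + t • v) x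
      simpa [norm_smul, Real.norm_of_nonneg ht.1] using this
    nlinarith [norm_nonneg v, norm_nonneg (G (x + t • v) - G x), ht.1]
  have hrhs : ∫ t in (0:ℝ)..1, (⟪G x, v⟫ + L * ‖v‖ ^ 2 * t) = ⟪G x, v⟫ + L * ‖v‖ ^ 2 / 2 := by
    have hInt : IntervalIntegrable (fun t : ℝ => L * ‖v‖ ^ 2 * t) MeasureTheory.volume 0 1 :=
      (continuous_const.mul continuous_id').intervalIntegrable 0 1
    rw [intervalIntegral.integral_add intervalIntegrable_const hInt,
      intervalIntegral.integral_const_mul, integral_id]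
    norm_num
    ring
  rw [hrhs] at hbound
  rw [key] at hbound
  linarith

set_option maxHeartbeats 1000000 in
lemma aux_avg_gradient {d n : ℕ} (f : Fin n → EuclideanSpace ℝ (Fin d) → ℝ)
    (grad : Fin n → EuclideanSpace ℝ (Fin d) → EuclideanSpace ℝ (Fin d))
    (hdiff : ∀ i z, HasGradientAt (f i) (grad i z) z) (z : EuclideanSpace ℝ (Fin d)) :
    HasGradientAt (fun y => (n:ℝ)⁻¹ * ∑ i, f i y) ((n:ℝ)⁻¹ • ∑ i, grad i z) z := by
  have h1 : HasFDerivAt (fun y => ∑ i, f i y)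
      (∑ i, InnerProductSpace.toDual ℝ _ (grad i z)) z :=
    HasFDerivAt.fun_sum fun i _ => (hdiff i z).hasFDerivAt
  have h2 : HasFDerivAt (fun y => (n:ℝ)⁻¹ * ∑ i, f i y)
      ((n:ℝ)⁻¹ • ∑ i, InnerProductSpace.toDual ℝ _ (grad i z)) z := by
    exact h1.const_smul ((n:ℝ)⁻¹)
  have h4 := hasFDerivAt_iff_hasGradientAt.mp h2
  simpa [map_sum, _root_.map_smul, LinearIsometryEquiv.symm_apply_apply] using h4

lemma aux_avg_lip {d n : ℕ} (hn : 0 < n)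
    (grad : Fin n → EuclideanSpace ℝ (Fin d) → EuclideanSpace ℝ (Fin d)) {L : ℝ}
    (hsmooth : ∀ i y z, ‖grad i y - grad i z‖ ≤ L * ‖y - z‖) (y z : EuclideanSpace ℝ (Fin d)) :
    ‖((n:ℝ)⁻¹ • ∑ i, grad i y) - ((n:ℝ)⁻¹ • ∑ i, grad i z)‖ ≤ L * ‖y - z‖ := by
  have hn' : (0:ℝ) < n := by exact_mod_cast hn
  rw [← smul_sub, ← Finset.sum_sub_distrib, norm_smul]
  have h1 : ‖∑ i, (grad i y - grad i z)‖ ≤ (n : ℝ) * (L * ‖y - z‖) := by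
    refine (norm_sum_le _ _).trans ?_
    calc ∑ i, ‖grad i y - grad i z‖ ≤ ∑ _i : Fin n, (L * ‖y - z‖) :=
          Finset.sum_le_sum fun i _ => hsmooth i y z
      _ = (n : ℝ) * (L * ‖y - z‖) := by simp [Finset.sum_const, mul_comm]
  have h2 : ‖(n:ℝ)⁻¹‖ = (n:ℝ)⁻¹ := Real.norm_of_nonneg (by positivity)
  rw [h2]
  calc (n:ℝ)⁻¹ * ‖∑ i, (grad i y - grad i z)‖ ≤ (n:ℝ)⁻¹ * ((n:ℝ) * (L * ‖y - z‖)) :=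
        mul_le_mul_of_nonneg_left h1 (by positivity)
    _ = L * ‖y - z‖ := by field_simp

lemma aux_consensus {d n : ℕ} (hn : 0 < n)
    (grad : Fin n → EuclideanSpace ℝ (Fin d) → EuclideanSpace ℝ (Fin d)) {L : ℝ} (hL : 0 ≤ L)
    (hsmooth : ∀ i y z, ‖grad i y - grad i z‖ ≤ L * ‖y - z‖)
    (z : EuclideanSpace ℝ (Fin d)) (y : Fin n → EuclideanSpace ℝ (Fin d)) :
    ‖((n:ℝ)⁻¹ • ∑ i, grad i z) - ((n:ℝ)⁻¹ • ∑ i, grad i (y i))‖ ^ 2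
      ≤ L ^ 2 / n * ∑ i, ‖y i - z‖ ^ 2 := by
  have hn' : (0:ℝ) < n := by exact_mod_cast hn
  have h1 : ‖((n:ℝ)⁻¹ • ∑ i, grad i z) - ((n:ℝ)⁻¹ • ∑ i, grad i (y i))‖
      ≤ (n:ℝ)⁻¹ * ∑ i, (L * ‖y i - z‖) := by
    rw [← smul_sub, ← Finset.sum_sub_distrib, norm_smul,
      Real.norm_of_nonneg (by positivity : (0:ℝ) ≤ (n:ℝ)⁻¹)]
    refine mul_le_mul_of_nonneg_left ((norm_sum_le _ _).trans ?_) (by positivity)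
    refine Finset.sum_le_sum fun i _ => ?_
    calc ‖grad i z - grad i (y i)‖ ≤ L * ‖z - y i‖ := hsmooth i z (y i)
      _ = L * ‖y i - z‖ := by rw [norm_sub_rev]
  have h2 : (∑ i, (L * ‖y i - z‖)) ^ 2 ≤ (n : ℝ) * ∑ i, (L * ‖y i - z‖) ^ 2 := by
    have := sq_sum_le_card_mul_sum_sq (s := (Finset.univ : Finset (Fin n)))
      (f := fun i => L * ‖y i - z‖)
    simpa using this
  have h3 : 0 ≤ ∑ i, (L * ‖y i - z‖) := Finset.sum_nonneg fun i _ => by positivity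
  calc ‖((n:ℝ)⁻¹ • ∑ i, grad i z) - ((n:ℝ)⁻¹ • ∑ i, grad i (y i))‖ ^ 2
      ≤ ((n:ℝ)⁻¹ * ∑ i, (L * ‖y i - z‖)) ^ 2 := by
        apply pow_le_pow_left₀ (norm_nonneg _) h1
    _ = (n:ℝ)⁻¹ ^ 2 * (∑ i, (L * ‖y i - z‖)) ^ 2 := by ring
    _ ≤ (n:ℝ)⁻¹ ^ 2 * ((n : ℝ) * ∑ i, (L * ‖y i - z‖) ^ 2) :=
        mul_le_mul_of_nonneg_left h2 (by positivity)
    _ = L ^ 2 / n * ∑ i, ‖y i - z‖ ^ 2 := by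
        rw [Finset.mul_sum, Finset.mul_sum, Finset.mul_sum]
        refine Finset.sum_congr rfl fun i _ => ?_
        field_simp

lemma aux_lip_continuous {E F' : Type*} [NormedAddCommGroup E] [NormedAddCommGroup F']
    {G : E → F'} {L : ℝ} (hL : 0 ≤ L) (hlip : ∀ y z, ‖G y - G z‖ ≤ L * ‖y - z‖) :
    Continuous G := by
  refine LipschitzWith.continuous (K := L.toNNReal) (LipschitzWith.of_dist_le_mul fun y z => ?_)
  rw [dist_eq_norm, dist_eq_norm]
  exact (hlip y z).trans (by rw [Real.coe_toNNReal L hL])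

lemma aux_lip_comp_memLp {α E F' : Type*} [MeasurableSpace α] {μ : Measure α}
    [NormedAddCommGroup E] [NormedAddCommGroup F'] {G : E → F'} {L : ℝ} (hL : 0 ≤ L)
    (hlip : ∀ y z, ‖G y - G z‖ ≤ L * ‖y - z‖) {u : α → E} {p : ENNReal}
    (hu : MemLp u p μ) [IsFiniteMeasure μ] : MemLp (fun ω => G (u ω)) p μ := by
  have hlip' : LipschitzWith L.toNNReal (fun z => G z - G 0) := by
    refine LipschitzWith.of_dist_le_mul fun y z => ?_
    rw [dist_eq_norm, dist_eq_norm, sub_sub_sub_cancel_right]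
    exact (hlip y z).trans (by rw [Real.coe_toNNReal L hL])
  have h1 : MemLp (fun ω => G (u ω) - G 0) p μ := hlip'.comp_memLp (by simp) hu
  have h2 := h1.add (memLp_const (G 0))
  refine h2.ae_eq (Filter.Eventually.of_forall fun ω => ?_)
  simp

lemma aux_memℒp_smul_sum {α : Type*} [MeasurableSpace α] {μ : Measure α} {E : Type*}
    [NormedAddCommGroup E] [NormedSpace ℝ E] {ι : Type*} {s : Finset ι} {u : ι → α → E}
    (h : ∀ i ∈ s, MemLp (u i) 2 μ) (c : ℝ) :
    MemLp (fun ω => c • ∑ i ∈ s, u i ω) 2 μ := by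
  have h1 : MemLp (fun ω => ∑ i ∈ s, u i ω) 2 μ := memLp_finset_sum s h
  exact h1.const_smul c

lemma aux_sm_smul_sum {α : Type*} {m : MeasurableSpace α} {E : Type*}
    [NormedAddCommGroup E] [NormedSpace ℝ E] {ι : Type*} {s : Finset ι} {u : ι → α → E}
    (h : ∀ i ∈ s, StronglyMeasurable[m] (u i)) (c : ℝ) :
    StronglyMeasurable[m] (fun ω => c • ∑ i ∈ s, u i ω) :=
  (Finset.stronglyMeasurable_fun_sum s h).const_smul c

lemma aux_pointwise {E : Type*} [NormedAddCommGroup E] [InnerProductSpace ℝ E] [CompleteSpace E]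
    {F : E → ℝ} {G : E → E} {L γ D2 : ℝ}
    (hL : 0 < L) (hγ0 : 0 < γ) (hLγ : L * γ ≤ 1)
    (hdiff : ∀ z, HasGradientAt F (G z) z)
    (hlip : ∀ y z, ‖G y - G z‖ ≤ L * ‖y - z‖)
    (xb b c : E) (hD : ‖G xb - b‖^2 ≤ D2) :
    F (xb + (-γ) • (b + c)) ≤ F xb - γ/2 * ‖G xb‖^2 + γ/2 * D2
      + (-γ) * ⟪G xb, c⟫ + L*γ^2 * ⟪b, c⟫ + L*γ^2/2 * ‖c‖^2 := by
  have hdesc := aux_descent hL.le hdiff hlip xb ((-γ) • (b + c))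
  have e1 : ⟪G xb, (-γ) • (b + c)⟫ = (-γ) * (⟪G xb, b⟫ + ⟪G xb, c⟫) := by
    rw [real_inner_smul_right, inner_add_right]
  have e2 : ‖(-γ) • (b + c)‖^2 = γ^2 * (‖b‖^2 + 2*⟪b,c⟫ + ‖c‖^2) := by
    rw [norm_smul, mul_pow, Real.norm_eq_abs, abs_neg, sq_abs, norm_add_sq_real]
  have e3 : 2 * ⟪G xb, b⟫ = ‖G xb‖^2 + ‖b‖^2 - ‖G xb - b‖^2 := by
    have h := norm_sub_sq_real (G xb) b
    linarith
  rw [e1, e2] at hdesc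
  nlinarith [hdesc, e3, mul_nonneg hγ0.le (sub_nonneg.mpr hD),
    mul_nonneg (mul_nonneg hγ0.le (sub_nonneg.mpr hLγ)) (pow_nonneg (norm_nonneg b) 2)]

set_option maxHeartbeats 2000000 in
/-- **Descent lemma for Gossip-PGA, non-convex case.**
Under `L`-smoothness, the gradient-noise assumptions and the mixing matrix assumptions, if
the step-size satisfies `γ < 1/(4L)`, then for every `k` the Gossip-PGA iterates satisfy
`E f(x̄⁽ᵏ⁺¹⁾) ≤ E f(x̄⁽ᵏ⁾) − (γ/4) E‖∇f(x̄⁽ᵏ⁾)‖² + γ²Lσ²/(2n)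
   + (3γL²/(4n)) E‖X⁽ᵏ⁾ − X̄⁽ᵏ⁾‖_F²`. -/
theorem gossip_pga_descent_lemma_nonconvex
    {Ω : Type*} [mΩ : MeasurableSpace Ω] (μ : Measure Ω) [IsProbabilityMeasure μ]
    (d n : ℕ) (hn : 0 < n)
    (f : Fin n → EuclideanSpace ℝ (Fin d) → ℝ)
    (grad : Fin n → EuclideanSpace ℝ (Fin d) → EuclideanSpace ℝ (Fin d))
    (L σ β γ : ℝ) (H : ℕ)
    (hL : 0 < L) (hσ : 0 ≤ σ) (hβ0 : 0 < β) (hβ1 : β < 1) (hγ0 : 0 < γ) (hH : 0 < H)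
    -- smoothness
    (hdiff : ∀ i z, HasGradientAt (f i) (grad i z) z)
    (hsmooth : ∀ i y z, ‖grad i y - grad i z‖ ≤ L * ‖y - z‖)
    -- mixing matrix assumptions
    (W : Matrix (Fin n) (Fin n) ℝ)
    (hWpos : ∀ i j, 0 ≤ W i j)
    (hWrow : ∀ i, ∑ j, W i j = 1)
    (hWcol : ∀ j, ∑ i, W i j = 1)
    (hWnull : ∀ v : Fin n → ℝ, (1 - W).mulVec v = 0 → ∃ c : ℝ, v = fun _ => c)
    (hWnorm : ∀ v : Fin n → ℝ,
      Real.sqrt (∑ i, (W.mulVec v i - (∑ j, v j) / n) ^ 2) ≤ β * Real.sqrt (∑ i, v i ^ 2))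
    -- the stochastic process: iterates and stochastic gradients, with their filtration
    (ℱ : ℕ → MeasurableSpace Ω) (hℱle : ∀ k, ℱ k ≤ mΩ) (hℱmono : Monotone ℱ)
    (x g : ℕ → Fin n → Ω → EuclideanSpace ℝ (Fin d))
    (hx_adapted : ∀ k i, StronglyMeasurable[ℱ k] (x k i))
    (hg_adapted : ∀ k i, StronglyMeasurable[ℱ (k + 1)] (g k i))
    (hx_L2 : ∀ k i, MemLp (x k i) 2 μ)
    (hg_L2 : ∀ k i, MemLp (g k i) 2 μ)
    -- all initial values coincide
    (hx0 : ∀ i j ω, x 0 i ω = x 0 j ω)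
    -- gradient-noise assumptions
    (hmean : ∀ k i, μ[fun ω => g k i ω - grad i (x k i ω) | ℱ k] =ᵐ[μ] 0)
    (hvar : ∀ k i, ∀ᵐ ω ∂μ,
      (μ[fun ω => ‖g k i ω - grad i (x k i ω)‖ ^ 2 | ℱ k]) ω ≤ σ ^ 2)
    (hindep : ∀ k, ∀ i j, i ≠ j →
      μ[fun ω => ⟪g k i ω - grad i (x k i ω), g k j ω - grad j (x k j ω)⟫ | ℱ k]
        =ᵐ[μ] 0)
    -- the Gossip-PGA recursion with averaging period `H`
    (hrec_gossip : ∀ k i ω, (k + 1) % H ≠ 0 →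
      x (k + 1) i ω = ∑ j, W i j • (x k j ω - γ • g k j ω))
    (hrec_avg : ∀ k i ω, (k + 1) % H = 0 →
      x (k + 1) i ω = (n : ℝ)⁻¹ • ∑ j, (x k j ω - γ • g k j ω))
    -- integrability of the function values
    (hfint : ∀ k, Integrable
      (fun ω => (n : ℝ)⁻¹ * ∑ i, f i ((n : ℝ)⁻¹ • ∑ j, x k j ω)) μ)
    -- step-size condition
    (hγ : γ < 1 / (4 * L)) :
    ∀ k : ℕ,
      (∫ ω, (n : ℝ)⁻¹ * ∑ i, f i ((n : ℝ)⁻¹ • ∑ j, x (k + 1) j ω) ∂μ) ≤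
        (∫ ω, (n : ℝ)⁻¹ * ∑ i, f i ((n : ℝ)⁻¹ • ∑ j, x k j ω) ∂μ)
        - γ / 4 * (∫ ω, ‖(n : ℝ)⁻¹ • ∑ i, grad i ((n : ℝ)⁻¹ • ∑ j, x k j ω)‖ ^ 2 ∂μ)
        + γ ^ 2 * L * σ ^ 2 / (2 * n)
        + 3 * γ * L ^ 2 / (4 * n)
            * (∫ ω, (∑ i, ‖x k i ω - (n : ℝ)⁻¹ • ∑ j, x k j ω‖ ^ 2) ∂μ) := by
  intro k
  have hm := hℱle k
  have hn' : (0:ℝ) < n := Nat.cast_pos.mpr hn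
  -- L² facts
  have hxbL2 : MemLp (fun ω => (n:ℝ)⁻¹ • ∑ j, x k j ω) 2 μ :=
    aux_memℒp_smul_sum (fun j _ => hx_L2 k j) _
  have hgradL2 : ∀ i, MemLp (fun ω => grad i (x k i ω)) 2 μ := fun i =>
    aux_lip_comp_memLp hL.le (hsmooth i) (hx_L2 k i)
  have hhL2 : MemLp (fun ω => (n:ℝ)⁻¹ • ∑ i, grad i (x k i ω)) 2 μ :=
    aux_memℒp_smul_sum (fun i _ => hgradL2 i) _
  have hNL2 : ∀ i, MemLp (fun ω => g k i ω - grad i (x k i ω)) 2 μ := fun i =>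
    (hg_L2 k i).sub (hgradL2 i)
  have hNbL2 : MemLp (fun ω => (n:ℝ)⁻¹ • ∑ i, (g k i ω - grad i (x k i ω))) 2 μ :=
    aux_memℒp_smul_sum (fun i _ => hNL2 i) _
  have haL2 : MemLp (fun ω => (n:ℝ)⁻¹ • ∑ i, grad i ((n:ℝ)⁻¹ • ∑ j, x k j ω)) 2 μ :=
    aux_lip_comp_memLp hL.le (aux_avg_lip hn grad hsmooth) hxbL2
  -- measurability
  have hxbm : StronglyMeasurable[ℱ k] (fun ω => (n:ℝ)⁻¹ • ∑ j, x k j ω) :=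
    aux_sm_smul_sum (fun j _ => hx_adapted k j) _
  have hhm : StronglyMeasurable[ℱ k] (fun ω => (n:ℝ)⁻¹ • ∑ i, grad i (x k i ω)) :=
    aux_sm_smul_sum (fun i _ =>
      (aux_lip_continuous hL.le (hsmooth i)).comp_stronglyMeasurable (hx_adapted k i)) _
  have ham : StronglyMeasurable[ℱ k]
      (fun ω => (n:ℝ)⁻¹ • ∑ i, grad i ((n:ℝ)⁻¹ • ∑ j, x k j ω)) :=
    (aux_lip_continuous hL.le (aux_avg_lip hn grad hsmooth)).comp_stronglyMeasurable hxbm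
  -- conditional mean zero of the averaged noise
  have hNbmean : μ[(fun ω => (n:ℝ)⁻¹ • ∑ i, (g k i ω - grad i (x k i ω))) | ℱ k] =ᵐ[μ] 0 := by
    have h1 : (fun ω => (n:ℝ)⁻¹ • ∑ i, (g k i ω - grad i (x k i ω)))
        = (n:ℝ)⁻¹ • ∑ i : Fin n, (fun ω => g k i ω - grad i (x k i ω)) := by
      funext ω
      simp [Finset.sum_apply]
    rw [h1]
    refine (condExp_smul _ _ _).trans ?_
    have h2 := condExp_finset_sum (μ := μ) (m := ℱ k)
      (f := fun (i : Fin n) (ω : Ω) => g k i ω - grad i (x k i ω)) (s := Finset.univ)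
      (fun i _ => (hNL2 i).integrable one_le_two)
    have h3 : ∀ᵐ ω ∂μ, ∀ i : Fin n, (μ[fun ω => g k i ω - grad i (x k i ω)|ℱ k]) ω = 0 :=
      ae_all_iff.mpr fun i => hmean k i
    filter_upwards [h2, h3] with ω h2ω h3ω
    simp only [Pi.smul_apply, Pi.zero_apply]
    rw [h2ω, Finset.sum_apply]
    simp [h3ω]
  have hGNb0 : ∫ ω, ⟪(n:ℝ)⁻¹ • ∑ i, grad i ((n:ℝ)⁻¹ • ∑ j, x k j ω),
      (n:ℝ)⁻¹ • ∑ i, (g k i ω - grad i (x k i ω))⟫ ∂μ = 0 :=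
    aux_integral_inner_zero hm ham haL2 hNbL2 hNbmean
  have hhNb0 : ∫ ω, ⟪(n:ℝ)⁻¹ • ∑ i, grad i (x k i ω),
      (n:ℝ)⁻¹ • ∑ i, (g k i ω - grad i (x k i ω))⟫ ∂μ = 0 :=
    aux_integral_inner_zero hm hhm hhL2 hNbL2 hNbmean
  -- variance bound
  have hNbvar : ∫ ω, ‖(n:ℝ)⁻¹ • ∑ i, (g k i ω - grad i (x k i ω))‖^2 ∂μ ≤ σ^2 / n := by
    have hIij : ∀ i j : Fin n, Integrable (fun ω =>
        ⟪g k i ω - grad i (x k i ω), g k j ω - grad j (x k j ω)⟫) μ := fun i j =>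
      aux_integrable_inner (hNL2 i) (hNL2 j)
    have hptv : ∀ ω, ‖(n:ℝ)⁻¹ • ∑ i, (g k i ω - grad i (x k i ω))‖^2
        = (n:ℝ)⁻¹^2 * ∑ i, ∑ j, ⟪g k i ω - grad i (x k i ω),
            g k j ω - grad j (x k j ω)⟫ := by
      intro ω
      rw [norm_smul, mul_pow, Real.norm_eq_abs, sq_abs, ← real_inner_self_eq_norm_sq]
      congr 1
      rw [sum_inner]
      exact Finset.sum_congr rfl fun i _ => by rw [inner_sum]
    have hdiag : ∀ i : Fin n, ∫ ω, ⟪g k i ω - grad i (x k i ω),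
        g k i ω - grad i (x k i ω)⟫ ∂μ ≤ σ^2 := by
      intro i
      calc ∫ ω, ⟪g k i ω - grad i (x k i ω), g k i ω - grad i (x k i ω)⟫ ∂μ
          = ∫ ω, ‖g k i ω - grad i (x k i ω)‖^2 ∂μ :=
            integral_congr_ae (Filter.Eventually.of_forall fun ω =>
              real_inner_self_eq_norm_sq _)
        _ = ∫ ω, (μ[fun ω => ‖g k i ω - grad i (x k i ω)‖^2|ℱ k]) ω ∂μ :=
            (integral_condExp hm).symm
        _ ≤ ∫ _ω, σ^2 ∂μ :=
            integral_mono_ae integrable_condExp (integrable_const _) (hvar k i)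
        _ = σ^2 := by simp
    have hcross : ∀ i j : Fin n, i ≠ j → ∫ ω, ⟪g k i ω - grad i (x k i ω),
        g k j ω - grad j (x k j ω)⟫ ∂μ = 0 := by
      intro i j hij
      calc ∫ ω, ⟪g k i ω - grad i (x k i ω), g k j ω - grad j (x k j ω)⟫ ∂μ
          = ∫ ω, (μ[fun ω => ⟪g k i ω - grad i (x k i ω),
              g k j ω - grad j (x k j ω)⟫|ℱ k]) ω ∂μ := (integral_condExp hm).symm
        _ = 0 := by rw [integral_congr_ae (hindep k i j hij)]; simp
    calc ∫ ω, ‖(n:ℝ)⁻¹ • ∑ i, (g k i ω - grad i (x k i ω))‖^2 ∂μ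
        = ∫ ω, (n:ℝ)⁻¹^2 * ∑ i, ∑ j, ⟪g k i ω - grad i (x k i ω),
            g k j ω - grad j (x k j ω)⟫ ∂μ :=
          integral_congr_ae (Filter.Eventually.of_forall hptv)
      _ = (n:ℝ)⁻¹^2 * ∑ i, ∑ j, ∫ ω, ⟪g k i ω - grad i (x k i ω),
            g k j ω - grad j (x k j ω)⟫ ∂μ := by
          rw [integral_const_mul,
            integral_finset_sum _ (fun i _ => integrable_finset_sum _ fun j _ => hIij i j)]
          congr 1
          exact Finset.sum_congr rfl fun i _ => integral_finset_sum _ fun j _ => hIij i j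
      _ ≤ (n:ℝ)⁻¹^2 * ((n:ℝ) * σ^2) := by
          refine mul_le_mul_of_nonneg_left ?_ (by positivity)
          have hrow : ∀ i : Fin n, ∑ j, ∫ ω, ⟪g k i ω - grad i (x k i ω),
              g k j ω - grad j (x k j ω)⟫ ∂μ ≤ σ^2 := by
            intro i
            rw [Finset.sum_eq_single_of_mem i (Finset.mem_univ i)
              (fun j _ hji => hcross i j (Ne.symm hji))]
            exact hdiag i
          calc ∑ i, ∑ j, ∫ ω, ⟪g k i ω - grad i (x k i ω),
                g k j ω - grad j (x k j ω)⟫ ∂μ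
              ≤ ∑ _i : Fin n, σ^2 := Finset.sum_le_sum fun i _ => hrow i
            _ = (n:ℝ) * σ^2 := by simp [mul_comm]
      _ = σ^2 / n := by
          field_simp
  -- recursion for the average iterate
  have hrec : ∀ ω, (n:ℝ)⁻¹ • ∑ j, x (k+1) j ω =
      ((n:ℝ)⁻¹ • ∑ j, x k j ω) + (-γ) • (((n:ℝ)⁻¹ • ∑ i, grad i (x k i ω))
        + ((n:ℝ)⁻¹ • ∑ i, (g k i ω - grad i (x k i ω)))) := by
    intro ω
    have hsum : ∑ j, x (k+1) j ω = ∑ j, (x k j ω - γ • g k j ω) := by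
      rcases eq_or_ne ((k+1) % H) 0 with h | h
      · calc ∑ j, x (k+1) j ω
            = ∑ _j : Fin n, (n:ℝ)⁻¹ • ∑ i, (x k i ω - γ • g k i ω) :=
              Finset.sum_congr rfl fun j _ => hrec_avg k j ω h
          _ = (n:ℝ) • ((n:ℝ)⁻¹ • ∑ i, (x k i ω - γ • g k i ω)) := by
              rw [Finset.sum_const, Finset.card_univ, Fintype.card_fin,
                ← Nat.cast_smul_eq_nsmul ℝ]
          _ = ∑ i, (x k i ω - γ • g k i ω) := by
              rw [smul_smul, mul_inv_cancel₀ hn'.ne', one_smul]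
      · calc ∑ j, x (k+1) j ω
            = ∑ i, ∑ j, W i j • (x k j ω - γ • g k j ω) :=
              Finset.sum_congr rfl fun i _ => hrec_gossip k i ω h
          _ = ∑ j, (∑ i, W i j) • (x k j ω - γ • g k j ω) := by
              rw [Finset.sum_comm]
              exact Finset.sum_congr rfl fun j _ => (Finset.sum_smul).symm
          _ = ∑ j, (x k j ω - γ • g k j ω) :=
              Finset.sum_congr rfl fun j _ => by rw [hWcol j, one_smul]
    have hga : ((n:ℝ)⁻¹ • ∑ i, grad i (x k i ω))
        + ((n:ℝ)⁻¹ • ∑ i, (g k i ω - grad i (x k i ω)))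
        = (n:ℝ)⁻¹ • ∑ i, g k i ω := by
      rw [← smul_add, ← Finset.sum_add_distrib]
      congr 1
      exact Finset.sum_congr rfl fun i _ => by abel
    rw [hga, hsum, Finset.sum_sub_distrib, ← Finset.smul_sum]
    module
  -- pointwise descent inequality
  have hpt : ∀ ω, (n:ℝ)⁻¹ * ∑ i, f i ((n:ℝ)⁻¹ • ∑ j, x (k+1) j ω) ≤
      (n:ℝ)⁻¹ * ∑ i, f i ((n:ℝ)⁻¹ • ∑ j, x k j ω)
      - γ/2 * ‖(n:ℝ)⁻¹ • ∑ i, grad i ((n:ℝ)⁻¹ • ∑ j, x k j ω)‖^2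
      + γ * L^2 / (2*n) * ∑ i, ‖x k i ω - (n:ℝ)⁻¹ • ∑ j, x k j ω‖^2
      + (-γ) * ⟪(n:ℝ)⁻¹ • ∑ i, grad i ((n:ℝ)⁻¹ • ∑ j, x k j ω),
          (n:ℝ)⁻¹ • ∑ i, (g k i ω - grad i (x k i ω))⟫
      + (L*γ^2) * ⟪(n:ℝ)⁻¹ • ∑ i, grad i (x k i ω),
          (n:ℝ)⁻¹ • ∑ i, (g k i ω - grad i (x k i ω))⟫
      + (L*γ^2/2) * ‖(n:ℝ)⁻¹ • ∑ i, (g k i ω - grad i (x k i ω))‖^2 := by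
    have hLγ : L * γ ≤ 1 := by
      have h6 : γ * (4*L) < 1 := (lt_div_iff₀ (by positivity)).mp hγ
      nlinarith
    intro ω
    have hp := aux_pointwise (F := fun y => (n:ℝ)⁻¹ * ∑ i, f i y)
      (G := fun z => (n:ℝ)⁻¹ • ∑ i, grad i z)
      (D2 := L^2/(n:ℝ) * ∑ i, ‖x k i ω - (n:ℝ)⁻¹ • ∑ j, x k j ω‖^2)
      hL hγ0 hLγ (aux_avg_gradient f grad hdiff) (aux_avg_lip hn grad hsmooth)
      ((n:ℝ)⁻¹ • ∑ j, x k j ω) ((n:ℝ)⁻¹ • ∑ i, grad i (x k i ω))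
      ((n:ℝ)⁻¹ • ∑ i, (g k i ω - grad i (x k i ω)))
      (by
        simpa using aux_consensus hn grad hL.le hsmooth
          ((n:ℝ)⁻¹ • ∑ j, x k j ω) (fun i => x k i ω))
    rw [hrec ω]
    have hco : γ/2 * (L^2/(n:ℝ) * ∑ i, ‖x k i ω - (n:ℝ)⁻¹ • ∑ j, x k j ω‖^2)
        = γ * L^2 / (2*(n:ℝ)) * ∑ i, ‖x k i ω - (n:ℝ)⁻¹ • ∑ j, x k j ω‖^2 := by
      rw [← mul_assoc, div_mul_div_comm]
    linarith [hp]
  -- integrability of all the pieces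
  have hIa : Integrable (fun ω => ‖(n:ℝ)⁻¹ • ∑ i, grad i ((n:ℝ)⁻¹ • ∑ j, x k j ω)‖^2) μ :=
    aux_integrable_norm_sq haL2
  have hIS : Integrable (fun ω => ∑ i, ‖x k i ω - (n:ℝ)⁻¹ • ∑ j, x k j ω‖^2) μ :=
    integrable_finset_sum _ fun i _ => aux_integrable_norm_sq ((hx_L2 k i).sub hxbL2)
  have hIq : Integrable (fun ω => ⟪(n:ℝ)⁻¹ • ∑ i, grad i ((n:ℝ)⁻¹ • ∑ j, x k j ω),
      (n:ℝ)⁻¹ • ∑ i, (g k i ω - grad i (x k i ω))⟫) μ :=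
    aux_integrable_inner haL2 hNbL2
  have hIr : Integrable (fun ω => ⟪(n:ℝ)⁻¹ • ∑ i, grad i (x k i ω),
      (n:ℝ)⁻¹ • ∑ i, (g k i ω - grad i (x k i ω))⟫) μ :=
    aux_integrable_inner hhL2 hNbL2
  have hIC : Integrable (fun ω => ‖(n:ℝ)⁻¹ • ∑ i, (g k i ω - grad i (x k i ω))‖^2) μ :=
    aux_integrable_norm_sq hNbL2
  have hRHS : Integrable (fun ω =>
      (n:ℝ)⁻¹ * ∑ i, f i ((n:ℝ)⁻¹ • ∑ j, x k j ω)
      - γ/2 * ‖(n:ℝ)⁻¹ • ∑ i, grad i ((n:ℝ)⁻¹ • ∑ j, x k j ω)‖^2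
      + γ * L^2 / (2*n) * ∑ i, ‖x k i ω - (n:ℝ)⁻¹ • ∑ j, x k j ω‖^2
      + (-γ) * ⟪(n:ℝ)⁻¹ • ∑ i, grad i ((n:ℝ)⁻¹ • ∑ j, x k j ω),
          (n:ℝ)⁻¹ • ∑ i, (g k i ω - grad i (x k i ω))⟫
      + (L*γ^2) * ⟪(n:ℝ)⁻¹ • ∑ i, grad i (x k i ω),
          (n:ℝ)⁻¹ • ∑ i, (g k i ω - grad i (x k i ω))⟫
      + (L*γ^2/2) * ‖(n:ℝ)⁻¹ • ∑ i, (g k i ω - grad i (x k i ω))‖^2) μ :=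
    (((((hfint k).sub (hIa.const_mul _)).add (hIS.const_mul _)).add
      (hIq.const_mul _)).add (hIr.const_mul _)).add (hIC.const_mul _)
  have hmono := integral_mono (hfint (k+1)) hRHS hpt
  have hsplit : ∫ ω, ((n:ℝ)⁻¹ * ∑ i, f i ((n:ℝ)⁻¹ • ∑ j, x k j ω)
      - γ/2 * ‖(n:ℝ)⁻¹ • ∑ i, grad i ((n:ℝ)⁻¹ • ∑ j, x k j ω)‖^2
      + γ * L^2 / (2*n) * ∑ i, ‖x k i ω - (n:ℝ)⁻¹ • ∑ j, x k j ω‖^2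
      + (-γ) * ⟪(n:ℝ)⁻¹ • ∑ i, grad i ((n:ℝ)⁻¹ • ∑ j, x k j ω),
          (n:ℝ)⁻¹ • ∑ i, (g k i ω - grad i (x k i ω))⟫
      + (L*γ^2) * ⟪(n:ℝ)⁻¹ • ∑ i, grad i (x k i ω),
          (n:ℝ)⁻¹ • ∑ i, (g k i ω - grad i (x k i ω))⟫
      + (L*γ^2/2) * ‖(n:ℝ)⁻¹ • ∑ i, (g k i ω - grad i (x k i ω))‖^2) ∂μ
      = (∫ ω, (n:ℝ)⁻¹ * ∑ i, f i ((n:ℝ)⁻¹ • ∑ j, x k j ω) ∂μ)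
      - γ/2 * ∫ ω, ‖(n:ℝ)⁻¹ • ∑ i, grad i ((n:ℝ)⁻¹ • ∑ j, x k j ω)‖^2 ∂μ
      + γ * L^2 / (2*n) * ∫ ω, ∑ i, ‖x k i ω - (n:ℝ)⁻¹ • ∑ j, x k j ω‖^2 ∂μ
      + (-γ) * ∫ ω, ⟪(n:ℝ)⁻¹ • ∑ i, grad i ((n:ℝ)⁻¹ • ∑ j, x k j ω),
          (n:ℝ)⁻¹ • ∑ i, (g k i ω - grad i (x k i ω))⟫ ∂μ
      + (L*γ^2) * ∫ ω, ⟪(n:ℝ)⁻¹ • ∑ i, grad i (x k i ω),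
          (n:ℝ)⁻¹ • ∑ i, (g k i ω - grad i (x k i ω))⟫ ∂μ
      + (L*γ^2/2) * ∫ ω, ‖(n:ℝ)⁻¹ • ∑ i, (g k i ω - grad i (x k i ω))‖^2 ∂μ := by
    have I2 : Integrable (fun ω => γ/2 * ‖(n:ℝ)⁻¹ • ∑ i, grad i ((n:ℝ)⁻¹ • ∑ j, x k j ω)‖^2) μ :=
      hIa.const_mul _
    have I3 : Integrable
        (fun ω => γ * L^2 / (2*n) * ∑ i, ‖x k i ω - (n:ℝ)⁻¹ • ∑ j, x k j ω‖^2) μ :=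
      hIS.const_mul _
    have I4 : Integrable (fun ω => (-γ) * ⟪(n:ℝ)⁻¹ • ∑ i, grad i ((n:ℝ)⁻¹ • ∑ j, x k j ω),
        (n:ℝ)⁻¹ • ∑ i, (g k i ω - grad i (x k i ω))⟫) μ := hIq.const_mul _
    have I5 : Integrable (fun ω => (L*γ^2) * ⟪(n:ℝ)⁻¹ • ∑ i, grad i (x k i ω),
        (n:ℝ)⁻¹ • ∑ i, (g k i ω - grad i (x k i ω))⟫) μ := hIr.const_mul _
    have I6 : Integrable
        (fun ω => (L*γ^2/2) * ‖(n:ℝ)⁻¹ • ∑ i, (g k i ω - grad i (x k i ω))‖^2) μ :=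
      hIC.const_mul _
    have I12 : Integrable (fun ω => (n:ℝ)⁻¹ * ∑ i, f i ((n:ℝ)⁻¹ • ∑ j, x k j ω)
        - γ/2 * ‖(n:ℝ)⁻¹ • ∑ i, grad i ((n:ℝ)⁻¹ • ∑ j, x k j ω)‖^2) μ := (hfint k).sub I2
    have I123 : Integrable (fun ω => (n:ℝ)⁻¹ * ∑ i, f i ((n:ℝ)⁻¹ • ∑ j, x k j ω)
        - γ/2 * ‖(n:ℝ)⁻¹ • ∑ i, grad i ((n:ℝ)⁻¹ • ∑ j, x k j ω)‖^2
        + γ * L^2 / (2*n) * ∑ i, ‖x k i ω - (n:ℝ)⁻¹ • ∑ j, x k j ω‖^2) μ := I12.add I3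
    have I1234 : Integrable (fun ω => (n:ℝ)⁻¹ * ∑ i, f i ((n:ℝ)⁻¹ • ∑ j, x k j ω)
        - γ/2 * ‖(n:ℝ)⁻¹ • ∑ i, grad i ((n:ℝ)⁻¹ • ∑ j, x k j ω)‖^2
        + γ * L^2 / (2*n) * ∑ i, ‖x k i ω - (n:ℝ)⁻¹ • ∑ j, x k j ω‖^2
        + (-γ) * ⟪(n:ℝ)⁻¹ • ∑ i, grad i ((n:ℝ)⁻¹ • ∑ j, x k j ω),
            (n:ℝ)⁻¹ • ∑ i, (g k i ω - grad i (x k i ω))⟫) μ := I123.add I4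
    have I12345 : Integrable (fun ω => (n:ℝ)⁻¹ * ∑ i, f i ((n:ℝ)⁻¹ • ∑ j, x k j ω)
        - γ/2 * ‖(n:ℝ)⁻¹ • ∑ i, grad i ((n:ℝ)⁻¹ • ∑ j, x k j ω)‖^2
        + γ * L^2 / (2*n) * ∑ i, ‖x k i ω - (n:ℝ)⁻¹ • ∑ j, x k j ω‖^2
        + (-γ) * ⟪(n:ℝ)⁻¹ • ∑ i, grad i ((n:ℝ)⁻¹ • ∑ j, x k j ω),
            (n:ℝ)⁻¹ • ∑ i, (g k i ω - grad i (x k i ω))⟫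
        + (L*γ^2) * ⟪(n:ℝ)⁻¹ • ∑ i, grad i (x k i ω),
            (n:ℝ)⁻¹ • ∑ i, (g k i ω - grad i (x k i ω))⟫) μ := I1234.add I5
    rw [integral_add I12345 I6, integral_add I1234 I5, integral_add I123 I4,
      integral_add I12 I3, integral_sub (hfint k) I2]
    simp only [integral_const_mul]
  rw [hsplit, hGNb0, hhNb0] at hmono
  have hApos : 0 ≤ ∫ ω, ‖(n:ℝ)⁻¹ • ∑ i, grad i ((n:ℝ)⁻¹ • ∑ j, x k j ω)‖^2 ∂μ :=
    integral_nonneg fun ω => by positivity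
  have hSpos : 0 ≤ ∫ ω, ∑ i, ‖x k i ω - (n:ℝ)⁻¹ • ∑ j, x k j ω‖^2 ∂μ :=
    integral_nonneg fun ω => Finset.sum_nonneg fun i _ => by positivity
  have h1 : γ/4 * (∫ ω, ‖(n:ℝ)⁻¹ • ∑ i, grad i ((n:ℝ)⁻¹ • ∑ j, x k j ω)‖^2 ∂μ)
      ≤ γ/2 * (∫ ω, ‖(n:ℝ)⁻¹ • ∑ i, grad i ((n:ℝ)⁻¹ • ∑ j, x k j ω)‖^2 ∂μ) := by
    nlinarith
  have h2 : γ * L^2 / (2*n) * (∫ ω, ∑ i, ‖x k i ω - (n:ℝ)⁻¹ • ∑ j, x k j ω‖^2 ∂μ)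
      ≤ 3 * γ * L^2 / (4*n) * (∫ ω, ∑ i, ‖x k i ω - (n:ℝ)⁻¹ • ∑ j, x k j ω‖^2 ∂μ) := by
    have : γ * L^2 / (2*n) ≤ 3 * γ * L^2 / (4*n) := by
      rw [div_le_div_iff₀ (by positivity) (by positivity)]
      nlinarith [mul_pos (mul_pos hγ0 (pow_pos hL 2)) hn']
    exact mul_le_mul_of_nonneg_right this hSpos
  have h3 : L*γ^2/2 * (∫ ω, ‖(n:ℝ)⁻¹ • ∑ i, (g k i ω - grad i (x k i ω))‖^2 ∂μ)
      ≤ γ^2 * L * σ^2 / (2*n) := by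
    calc L*γ^2/2 * (∫ ω, ‖(n:ℝ)⁻¹ • ∑ i, (g k i ω - grad i (x k i ω))‖^2 ∂μ)
        ≤ L*γ^2/2 * (σ^2 / n) := mul_le_mul_of_nonneg_left hNbvar (by positivity)
      _ = γ^2 * L * σ^2 / (2*n) := by
          rw [div_mul_div_comm]
          ring
  linarith
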